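/- Let G(z) = Σ_{i=0}^{ν} G_i z^i be an encoder of a delay-free (n,k) convolutional code C and let 𝒢_j be the j-th sliding encoder matrix of size (j+1)k × (j+1)n. Then d_j^c(C) = (n−k)(j+1)+1 if and only if every full-size ((j+1)k × (j+1)k) minor of 𝒢_j formed from columns with indices t_1 < ... < t_{(j+1)k} satisfying t_{sk+1} > sn for s = 1,...,j, is nonzero. -/

import Mathlib

open Polynomial Matrix

noncomputable def wtTrunc {F : Type*} [Field F] {n : ℕ} (j : ℕ)
    (v : Fin n → Polynomial F) : ℕ :=
  {p : ℕ × Fin n | p.1 ≤ j ∧ (v p.2).coeff p.1 ≠ 0}.ncard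

noncomputable def wtFull {F : Type*} [Field F] {n : ℕ} (v : Fin n → Polynomial F) : ℕ :=
  {p : ℕ × Fin n | (v p.2).coeff p.1 ≠ 0}.ncard

noncomputable def colDist {F : Type*} [Field F] {n : ℕ}
    (C : Submodule (Polynomial F) (Fin n → Polynomial F)) (j : ℕ) : ℕ :=
  sInf {w | ∃ v ∈ C, (fun t => (v t).coeff 0) ≠ (0 : Fin n → F) ∧ w = wtTrunc j v}

noncomputable def freeDist {F : Type*} [Field F] {n : ℕ}
    (C : Submodule (Polynomial F) (Fin n → Polynomial F)) : ℕ :=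
  sInf {w | ∃ v ∈ C, v ≠ 0 ∧ w = wtFull v}

def IsEncoder {F : Type*} [Field F] {k n : ℕ}
    (C : Submodule (Polynomial F) (Fin n → Polynomial F))
    (G : Matrix (Fin k) (Fin n) (Polynomial F)) : Prop :=
  LinearIndependent (Polynomial F) (fun i : Fin k => fun t => G i t) ∧
    Submodule.span (Polynomial F) (Set.range (fun i : Fin k => fun t => G i t)) = C

def IsDelayFree {F : Type*} [Field F] {k n : ℕ}
    (G : Matrix (Fin k) (Fin n) (Polynomial F)) : Prop :=
  LinearIndependent F (fun i : Fin k => fun t => (G i t).coeff 0)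

noncomputable def codeDegree {F : Type*} [Field F] {k n : ℕ}
    (G : Matrix (Fin k) (Fin n) (Polynomial F)) : ℕ :=
  Finset.univ.sup fun φ : Fin k → Fin n => ((G.submatrix id φ).det).natDegree

noncomputable def rowDegSum {F : Type*} [Field F] {k n : ℕ}
    (G : Matrix (Fin k) (Fin n) (Polynomial F)) : ℕ :=
  ∑ i : Fin k, Finset.univ.sup fun t : Fin n => (G i t).natDegree

noncomputable def Gcoeff {F : Type*} [Field F] {k n : ℕ}
    (G : Matrix (Fin k) (Fin n) (Polynomial F)) (i : ℕ) : Matrix (Fin k) (Fin n) F :=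
  fun a b => (G a b).coeff i

def slideMat {F : Type*} [Field F] {k n : ℕ} (Gc : ℕ → Matrix (Fin k) (Fin n) F)
    (j : ℕ) : Matrix (Fin ((j + 1) * k)) (Fin ((j + 1) * n)) F :=
  fun r c =>
    if h : (r : ℕ) / k ≤ (c : ℕ) / n ∧ (r : ℕ) % k < k ∧ (c : ℕ) % n < n then
      Gc ((c : ℕ) / n - (r : ℕ) / k) ⟨(r : ℕ) % k, h.2.1⟩ ⟨(c : ℕ) % n, h.2.2⟩
    else 0

namespace Stmt10Aux

set_option linter.unusedSectionVars false

open Finset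

variable {F : Type*} [Field F] [DecidableEq F] {k n : ℕ}

/-- block codeword: coefficient block `c` of the codeword generated by input blocks `u`. -/
noncomputable def cwB (Gc : ℕ → Matrix (Fin k) (Fin n) F) (u : ℕ → Fin k → F) (c : ℕ) :
    Fin n → F :=
  ∑ r ∈ Finset.range (c + 1), Matrix.vecMul (u r) (Gc (c - r))

/-- Hamming weight of a vector. -/
noncomputable def wtV {m : ℕ} (w : Fin m → F) : ℕ :=
  (Finset.univ.filter (fun t => w t ≠ 0)).card

/-- truncated weight of the codeword generated by `u`. -/
noncomputable def wtB (Gc : ℕ → Matrix (Fin k) (Fin n) F) (u : ℕ → Fin k → F) (j : ℕ) : ℕ :=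
  ∑ c ∈ Finset.range (j + 1), wtV (cwB Gc u c)

/-- the family of minors appearing in the theorem -/
def Minors (Gc : ℕ → Matrix (Fin k) (Fin n) F) (j : ℕ) : Prop :=
  ∀ φ : Fin ((j + 1) * k) → Fin ((j + 1) * n), StrictMono φ →
    (∀ (s : ℕ), 1 ≤ s → s ≤ j → ∀ h : s * k < (j + 1) * k,
      s * n < ((φ ⟨s * k, h⟩ : Fin ((j + 1) * n)) : ℕ)) →
    ((slideMat Gc j).submatrix id φ).det ≠ 0

lemma cwB_congr {Gc : ℕ → Matrix (Fin k) (Fin n) F} {u u' : ℕ → Fin k → F} {c : ℕ}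
    (h : ∀ r ≤ c, u r = u' r) : cwB Gc u c = cwB Gc u' c := by
  unfold cwB
  refine Finset.sum_congr rfl fun r hr => ?_
  rw [h r (by simpa [Nat.lt_succ_iff] using hr)]

lemma cwB_zero {Gc : ℕ → Matrix (Fin k) (Fin n) F} {u : ℕ → Fin k → F} :
    cwB Gc u 0 = Matrix.vecMul (u 0) (Gc 0) := by
  simp [cwB]

lemma wtV_add_card_zeros {m : ℕ} (w : Fin m → F) :
    wtV w + (Finset.univ.filter (fun t => w t = 0)).card = m := by
  classical
  have h : (Finset.univ.filter (fun t => w t = 0)) =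
      (Finset.univ.filter (fun t : Fin m => ¬ w t ≠ 0)) := by simp
  rw [wtV, h, Finset.card_filter_add_card_filter_not, Finset.card_univ,
    Fintype.card_fin]

lemma wtV_pos {m : ℕ} {w : Fin m → F} (h : w ≠ 0) : 1 ≤ wtV w := by
  rw [Nat.one_le_iff_ne_zero, wtV]
  simp only [ne_eq, Finset.card_eq_zero, Finset.filter_eq_empty_iff, not_forall, not_not]
  obtain ⟨t, ht⟩ := Function.ne_iff.mp h
  exact ⟨t, Finset.mem_univ t, by simpa using ht⟩

lemma wtV_le_of_vanish {φJ : Fin k → Fin n} (hinj : Function.Injective φJ)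
    {w : Fin n → F} {s : Finset (Fin k)} (h : ∀ i ∈ s, w (φJ i) = 0) :
    wtV w ≤ n - s.card := by
  classical
  have hsub : Finset.univ.filter (fun t => w t ≠ 0) ⊆ Finset.univ \ s.image φJ := by
    intro t ht
    simp only [Finset.mem_filter, Finset.mem_univ, true_and] at ht
    simp only [Finset.mem_sdiff, Finset.mem_univ, true_and, Finset.mem_image, not_exists]
    rintro i ⟨his, hit⟩
    exact ht (by rw [← hit]; exact h i his)
  calc wtV w ≤ (Finset.univ \ s.image φJ).card := Finset.card_le_card hsub
    _ = n - s.card := by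
        rw [Finset.card_sdiff_of_subset (Finset.subset_univ _), Finset.card_image_of_injective _ hinj]
        simp

/-- Generic fiberwise counting: a filter-card over a flattened index equals the sum
of blockwise filter-cards. -/
lemma card_flat (hn : 0 < n) (m : ℕ) (P : ℕ → Fin n → Prop) [∀ c t, Decidable (P c t)] :
    (Finset.univ.filter
        (fun Cc : Fin (m * n) => P ((Cc : ℕ) / n) ⟨(Cc : ℕ) % n, Nat.mod_lt _ hn⟩)).card
      = ∑ c ∈ Finset.range m, (Finset.univ.filter (fun t => P c t)).card := by
  classical
  rw [Finset.card_filter]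
  rw [← Fintype.sum_equiv (finProdFinEquiv (m := m) (n := n))
      (fun p : Fin m × Fin n => if P ((finProdFinEquiv p : ℕ) / n)
        ⟨(finProdFinEquiv p : ℕ) % n, Nat.mod_lt _ hn⟩ then 1 else 0)
      (fun Cc : Fin (m * n) => if P ((Cc : ℕ) / n) ⟨(Cc : ℕ) % n, Nat.mod_lt _ hn⟩ then 1 else 0)
      (fun p => rfl)]
  rw [Fintype.sum_prod_type]
  rw [← Fin.sum_univ_eq_sum_range (fun c => (Finset.univ.filter (fun t => P c t)).card)]
  refine Finset.sum_congr rfl fun a _ => ?_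
  rw [Finset.card_filter]
  refine Finset.sum_congr rfl fun b _ => ?_
  have h1 : ((finProdFinEquiv (a, b) : Fin (m * n)) : ℕ) = (b : ℕ) + n * (a : ℕ) := by
    simp [finProdFinEquiv]
  have h2 : ((b : ℕ) + n * (a : ℕ)) / n = (a : ℕ) := by
    rw [Nat.add_mul_div_left _ _ hn, Nat.div_eq_of_lt b.is_lt]; simp
  have h3 : ((b : ℕ) + n * (a : ℕ)) % n = (b : ℕ) := by
    rw [Nat.add_mul_mod_self_left, Nat.mod_eq_of_lt b.is_lt]
  rw [h1]
  have hb : (⟨((b : ℕ) + n * (a : ℕ)) % n, Nat.mod_lt _ hn⟩ : Fin n) = b := Fin.ext h3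
  rw [h2, hb]

lemma cwB_shift (Gc : ℕ → Matrix (Fin k) (Fin n) F) {u : ℕ → Fin k → F} {s : ℕ}
    (h : ∀ b < s, u b = 0) (c : ℕ) :
    cwB Gc (fun b => u (b + s)) c = cwB Gc u (c + s) := by
  unfold cwB
  symm
  calc ∑ r ∈ Finset.range (c + s + 1), Matrix.vecMul (u r) (Gc (c + s - r))
      = ∑ r ∈ Finset.Ico s (c + s + 1), Matrix.vecMul (u r) (Gc (c + s - r)) := by
        rw [Finset.range_eq_Ico]
        refine (Finset.sum_subset (Finset.Ico_subset_Ico (Nat.zero_le s) le_rfl) ?_).symm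
        intro x hx hnx
        simp only [Finset.mem_Ico] at hx hnx
        rw [h x (by omega)]
        simp
    _ = ∑ i ∈ Finset.range (c + s + 1 - s), Matrix.vecMul (u (s + i)) (Gc (c + s - (s + i))) :=
        Finset.sum_Ico_eq_sum_range _ _ _
    _ = ∑ i ∈ Finset.range (c + 1), Matrix.vecMul (u (i + s)) (Gc (c - i)) := by
        rw [show c + s + 1 - s = c + 1 by omega]
        refine Finset.sum_congr rfl fun i _ => ?_
        rw [show s + i = i + s by omega, show c + s - (i + s) = c - i by omega]

def unflat (hk : 0 < k) (j : ℕ) (x : Fin ((j + 1) * k) → F) : ℕ → Fin k → F :=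
  fun b i =>
    if h : b < j + 1 then
      x ⟨(i : ℕ) + k * b, by
        have h1 : (i : ℕ) + k * b < k * (b + 1) := by
          have hi := i.is_lt; rw [Nat.mul_succ]; omega
        have h2 : k * (b + 1) ≤ (j + 1) * k := by
          rw [Nat.mul_comm]; exact Nat.mul_le_mul_right k (by omega)
        omega⟩
    else 0

def flatu (hk : 0 < k) (j : ℕ) (u : ℕ → Fin k → F) : Fin ((j + 1) * k) → F :=
  fun r => u ((r : ℕ) / k) ⟨(r : ℕ) % k, Nat.mod_lt _ hk⟩

lemma flatu_unflat (hk : 0 < k) (j : ℕ) (x : Fin ((j + 1) * k) → F) :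
    flatu hk j (unflat hk j x) = x := by
  funext r
  have hb : (r : ℕ) / k < j + 1 := (Nat.div_lt_iff_lt_mul hk).mpr r.is_lt
  rw [flatu, unflat, dif_pos hb]
  congr 1
  exact Fin.ext (by simp [Nat.mod_add_div])

lemma vecMul_slideMat (hk : 0 < k) (hn : 0 < n) (Gc : ℕ → Matrix (Fin k) (Fin n) F)
    (j : ℕ) (u : ℕ → Fin k → F) (Cc : Fin ((j + 1) * n)) :
    Matrix.vecMul (flatu hk j u) (slideMat Gc j) Cc
      = cwB Gc u ((Cc : ℕ) / n) ⟨(Cc : ℕ) % n, Nat.mod_lt _ hn⟩ := by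
  classical
  have hCb : (Cc : ℕ) / n < j + 1 := (Nat.div_lt_iff_lt_mul hn).mpr Cc.is_lt
  have lhs : Matrix.vecMul (flatu hk j u) (slideMat Gc j) Cc
      = ∑ r : Fin ((j + 1) * k), flatu hk j u r * slideMat Gc j r Cc := by
    simp [Matrix.vecMul, dotProduct]
  rw [lhs]
  rw [← Fintype.sum_equiv (finProdFinEquiv (m := j + 1) (n := k))
      (fun p : Fin (j + 1) × Fin k =>
        flatu hk j u (finProdFinEquiv p) * slideMat Gc j (finProdFinEquiv p) Cc)
      (fun r => flatu hk j u r * slideMat Gc j r Cc) (fun p => rfl)]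
  rw [Fintype.sum_prod_type]
  have key : ∀ (a : Fin (j + 1)) (b : Fin k),
      flatu hk j u (finProdFinEquiv (a, b)) * slideMat Gc j (finProdFinEquiv (a, b)) Cc
        = if (a : ℕ) ≤ (Cc : ℕ) / n then
            u (a : ℕ) b * Gc ((Cc : ℕ) / n - (a : ℕ)) b ⟨(Cc : ℕ) % n, Nat.mod_lt _ hn⟩
          else 0 := by
    intro a b
    have h1 : ((finProdFinEquiv (a, b) : Fin ((j + 1) * k)) : ℕ) = (b : ℕ) + k * (a : ℕ) := by
      simp [finProdFinEquiv]
    have h2 : ((b : ℕ) + k * (a : ℕ)) / k = (a : ℕ) := by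
      rw [Nat.add_mul_div_left _ _ hk, Nat.div_eq_of_lt b.is_lt]; simp
    have h3 : ((b : ℕ) + k * (a : ℕ)) % k = (b : ℕ) := by
      rw [Nat.add_mul_mod_self_left, Nat.mod_eq_of_lt b.is_lt]
    rw [flatu, slideMat]
    simp only [h1, h2, h3]
    by_cases hle : (a : ℕ) ≤ (Cc : ℕ) / n
    · rw [dif_pos ⟨hle, b.is_lt, Nat.mod_lt _ hn⟩, if_pos hle]
    · rw [dif_neg (fun h => hle h.1), if_neg hle]
      exact mul_zero _
  simp only [key]
  have pull : ∀ a : Fin (j + 1), (∑ b : Fin k, if (a : ℕ) ≤ (Cc : ℕ) / n then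
        u (a : ℕ) b * Gc ((Cc : ℕ) / n - (a : ℕ)) b ⟨(Cc : ℕ) % n, Nat.mod_lt _ hn⟩ else 0)
      = if (a : ℕ) ≤ (Cc : ℕ) / n then (∑ b : Fin k,
        u (a : ℕ) b * Gc ((Cc : ℕ) / n - (a : ℕ)) b ⟨(Cc : ℕ) % n, Nat.mod_lt _ hn⟩) else 0 :=
    fun a => by split <;> simp
  simp only [pull]
  rw [cwB]
  have rhs : (∑ r ∈ Finset.range ((Cc : ℕ) / n + 1), Matrix.vecMul (u r) (Gc ((Cc : ℕ) / n - r)))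
        ⟨(Cc : ℕ) % n, Nat.mod_lt _ hn⟩
      = ∑ r ∈ Finset.range ((Cc : ℕ) / n + 1),
          ∑ b : Fin k, u r b * Gc ((Cc : ℕ) / n - r) b ⟨(Cc : ℕ) % n, Nat.mod_lt _ hn⟩ := by
    rw [Finset.sum_apply]
    exact Finset.sum_congr rfl fun r _ => by simp [Matrix.vecMul, dotProduct]
  rw [rhs]
  rw [Fin.sum_univ_eq_sum_range (fun a => if a ≤ (Cc : ℕ) / n then ∑ b : Fin k,
      u a b * Gc ((Cc : ℕ) / n - a) b ⟨(Cc : ℕ) % n, Nat.mod_lt _ hn⟩ else 0) (j + 1)]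
  rw [← Finset.sum_filter]
  have hf : (Finset.range (j + 1)).filter (fun a => a ≤ (Cc : ℕ) / n)
      = Finset.range ((Cc : ℕ) / n + 1) := by
    ext a
    simp only [Finset.mem_filter, Finset.mem_range]
    omega
  rw [hf]

lemma wtB_card (hn : 0 < n) (Gc : ℕ → Matrix (Fin k) (Fin n) F) (u : ℕ → Fin k → F) (j : ℕ) :
    (Finset.univ.filter (fun Cc : Fin ((j + 1) * n) =>
        cwB Gc u ((Cc : ℕ) / n) ⟨(Cc : ℕ) % n, Nat.mod_lt _ hn⟩ ≠ 0)).card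
      = wtB Gc u j :=
  card_flat hn (j + 1) (fun c t => cwB Gc u c t ≠ 0)

lemma exists_invertible_cols (G0 : Matrix (Fin k) (Fin n) F)
    (hGc0 : ∀ w : Fin k → F, Matrix.vecMul w G0 = 0 → w = 0) :
    ∃ φJ : Fin k → Fin n, Function.Injective φJ ∧ IsUnit ((G0.submatrix id φJ)).det := by
  classical
  set col : Fin n → (Fin k → F) := fun t i => G0 i t with hcol
  have hspan : Submodule.span F (Set.range col) = ⊤ := by
    by_contra hne
    obtain ⟨f, hf0, hfbot⟩ := Submodule.exists_dual_map_eq_bot_of_lt_top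
      (lt_top_iff_ne_top.mpr hne) inferInstance
    set w : Fin k → F := fun i => f (Pi.single i 1) with hw
    have hfx : ∀ x : Fin k → F, f x = ∑ i, x i * w i := by
      intro x
      have hx : x = ∑ i, x i • (Pi.single i 1 : Fin k → F) := by
        funext t; simp [Pi.single_apply]
      calc f x = f (∑ i, x i • (Pi.single i 1 : Fin k → F)) := by rw [← hx]
        _ = ∑ i, x i * w i := by rw [map_sum]; simp [hw, smul_eq_mul]
    have hwv : Matrix.vecMul w G0 = 0 := by
      funext t
      have hct : col t ∈ Submodule.span F (Set.range col) :=
        Submodule.subset_span (Set.mem_range_self t)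
      have : f (col t) = 0 := by
        have := Submodule.mem_map_of_mem (f := f) hct
        rw [hfbot] at this
        exact (Submodule.mem_bot F).mp this
      rw [hfx] at this
      simpa [Matrix.vecMul, dotProduct, hcol, mul_comm] using this
    have : w = 0 := hGc0 w hwv
    apply hf0
    apply LinearMap.ext
    intro x
    rw [hfx, this]
    simp
  obtain ⟨b, hbsub, hbspan, hbli⟩ := exists_linearIndependent F (Set.range col)
  rw [hspan] at hbspan
  have hfin : b.Finite := (Set.finite_range col).subset hbsub
  haveI : Fintype b := hfin.fintype
  have hbasis : Module.Basis b F (Fin k → F) :=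
    Module.Basis.mk hbli (by rw [Subtype.range_coe]; exact hbspan.ge)
  have hcard : Fintype.card b = k := by
    rw [← Module.finrank_eq_card_basis hbasis]
    simp [Module.finrank_pi]
  have e : Fin k ≃ b := (Fintype.equivFinOfCardEq hcard).symm
  have hchoose : ∀ v : b, ∃ t : Fin n, col t = (v : Fin k → F) := fun v => hbsub v.2
  choose g hg using hchoose
  refine ⟨fun i => g (e i), ?_, ?_⟩
  · intro i i' h
    have h' : g (e i) = g (e i') := h
    have : (e i : Fin k → F) = (e i' : Fin k → F) := by rw [← hg (e i), ← hg (e i'), h']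
    exact e.injective (Subtype.ext this)
  · rw [isUnit_iff_ne_zero]
    intro hdet
    obtain ⟨x, hx0, hxe⟩ := Matrix.exists_mulVec_eq_zero_iff.mpr hdet
    apply hx0
    funext i'
    have hli2 : LinearIndependent F (fun v : b => (v : Fin k → F)) := hbli
    have hli3 : LinearIndependent F (fun i : Fin k => ((e i : b) : Fin k → F)) :=
      hli2.comp e e.injective
    refine Fintype.linearIndependent_iff.mp hli3 x ?_ i'
    funext i
    calc (∑ i'' : Fin k, x i'' • ((e i'' : b) : Fin k → F)) i
        = ∑ i'' : Fin k, x i'' * G0 i (g (e i'')) := by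
          rw [Finset.sum_apply]
          refine Finset.sum_congr rfl fun i'' _ => ?_
          rw [Pi.smul_apply, smul_eq_mul]
          congr 1
          rw [← hg (e i'')]
      _ = ((G0.submatrix id (fun i => g (e i))).mulVec x) i := by
          simp [Matrix.mulVec, dotProduct, mul_comm]
      _ = 0 := by rw [hxe]; rfl

noncomputable def extu (Gc : ℕ → Matrix (Fin k) (Fin n) F) (φJ : Fin k → Fin n) (j' : ℕ)
    (u0 : ℕ → Fin k → F) : ℕ → Fin k → F
  | c =>
    if c ≤ j' then u0 c
    else
      - Matrix.vecMul
          (fun i => (∑ r ∈ (Finset.range c).attach,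
            Matrix.vecMul (extu Gc φJ j' u0 r.1) (Gc (c - r.1))) (φJ i))
          ((Gc 0).submatrix id φJ)⁻¹
  termination_by c => c
  decreasing_by exact Finset.mem_range.mp r.2

lemma extu_le {Gc : ℕ → Matrix (Fin k) (Fin n) F} {φJ : Fin k → Fin n} {j' : ℕ}
    {u0 : ℕ → Fin k → F} {c : ℕ} (h : c ≤ j') : extu Gc φJ j' u0 c = u0 c := by
  rw [extu, if_pos h]

lemma extu_spec {Gc : ℕ → Matrix (Fin k) (Fin n) F} {φJ : Fin k → Fin n}
    (hA : IsUnit ((Gc 0).submatrix id φJ).det) {j' : ℕ} {u0 : ℕ → Fin k → F} {c : ℕ}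
    (h : j' < c) (i : Fin k) : cwB Gc (extu Gc φJ j' u0) c (φJ i) = 0 := by
  set E := extu Gc φJ j' u0 with hE
  set S : Fin n → F := ∑ r ∈ Finset.range c, Matrix.vecMul (E r) (Gc (c - r)) with hS
  have hstep : E c = - Matrix.vecMul (fun i => S (φJ i)) ((Gc 0).submatrix id φJ)⁻¹ := by
    conv_lhs => rw [hE, extu]
    rw [if_neg (by omega), ← hE]
    have heq : (fun i => (∑ r ∈ (Finset.range c).attach,
          Matrix.vecMul (E r.1) (Gc (c - r.1))) (φJ i)) = fun i => S (φJ i) := by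
      funext i'
      rw [hS]
      exact congrFun
        (Finset.sum_attach (Finset.range c) fun r => Matrix.vecMul (E r) (Gc (c - r))) (φJ i')
    rw [heq]
  have hcw : cwB Gc E c = S + Matrix.vecMul (E c) (Gc 0) := by
    rw [cwB, Finset.sum_range_succ, Nat.sub_self, hS]
  rw [hcw, Pi.add_apply]
  have claim1 : (Matrix.vecMul (E c) (Gc 0)) (φJ i)
      = (Matrix.vecMul (E c) ((Gc 0).submatrix id φJ)) i := by
    simp [Matrix.vecMul, dotProduct, Matrix.submatrix_apply]
  have claim2 : Matrix.vecMul (E c) ((Gc 0).submatrix id φJ) = - fun i => S (φJ i) := by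
    rw [hstep, Matrix.neg_vecMul, Matrix.vecMul_vecMul, Matrix.nonsing_inv_mul _ hA,
      Matrix.vecMul_one]
  rw [claim1, claim2]
  simp

lemma extu_wt {Gc : ℕ → Matrix (Fin k) (Fin n) F} {φJ : Fin k → Fin n}
    (hinj : Function.Injective φJ) (hA : IsUnit ((Gc 0).submatrix id φJ).det)
    {j j' : ℕ} (hj : j' ≤ j) (u0 : ℕ → Fin k → F) :
    wtB Gc (extu Gc φJ j' u0) j ≤ wtB Gc u0 j' + (j - j') * (n - k) := by
  rw [wtB, wtB]
  rw [← Finset.sum_range_add_sum_Ico (fun c => wtV (cwB Gc (extu Gc φJ j' u0) c))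
    (show j' + 1 ≤ j + 1 by omega)]
  have h1 : ∑ c ∈ Finset.range (j' + 1), wtV (cwB Gc (extu Gc φJ j' u0) c)
      = ∑ c ∈ Finset.range (j' + 1), wtV (cwB Gc u0 c) := by
    refine Finset.sum_congr rfl fun c hc => ?_
    congr 1
    refine cwB_congr fun r hr => ?_
    exact extu_le (le_trans hr (by simpa [Nat.lt_succ_iff] using hc))
  have h2 : ∑ c ∈ Finset.Ico (j' + 1) (j + 1), wtV (cwB Gc (extu Gc φJ j' u0) c)
      ≤ (j - j') * (n - k) := by
    calc ∑ c ∈ Finset.Ico (j' + 1) (j + 1), wtV (cwB Gc (extu Gc φJ j' u0) c)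
        ≤ ∑ _c ∈ Finset.Ico (j' + 1) (j + 1), (n - k) := by
          refine Finset.sum_le_sum fun c hc => ?_
          simp only [Finset.mem_Ico] at hc
          have hv := wtV_le_of_vanish (s := Finset.univ)
            (w := cwB Gc (extu Gc φJ j' u0) c) hinj
            (fun i _ => extu_spec (u0 := u0) hA (show j' < c from by omega) i)
          simpa using hv
      _ = (j - j') * (n - k) := by
          rw [Finset.sum_const, Nat.card_Ico, smul_eq_mul]
          congr 1
          omega
  omega

lemma exists_low_weight (hk : 0 < k) (hn : 0 < n) (hkn : k ≤ n)
    (Gc : ℕ → Matrix (Fin k) (Fin n) F)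
    (hGc0 : ∀ w : Fin k → F, Matrix.vecMul w (Gc 0) = 0 → w = 0) (j : ℕ) :
    ∃ u : ℕ → Fin k → F, u 0 ≠ 0 ∧ wtB Gc u j ≤ (n - k) * (j + 1) + 1 := by
  obtain ⟨φJ, hinj, hA⟩ := exists_invertible_cols (Gc 0) hGc0
  set A := (Gc 0).submatrix id φJ with hAdef
  set z : Fin k := ⟨0, hk⟩
  set u0 : ℕ → Fin k → F := fun _ => fun i' => A⁻¹ z i' with hu0
  have h1 : Matrix.vecMul (u0 0) A = (A⁻¹ * A) z := by
    funext i
    simp [Matrix.vecMul, dotProduct, Matrix.mul_apply, hu0]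
  rw [Matrix.nonsing_inv_mul _ hA] at h1
  have hne : u0 0 ≠ 0 := by
    intro h0
    have h2 := congrFun h1 z
    rw [h0] at h2
    rw [Matrix.zero_vecMul] at h2
    simp [Matrix.one_apply_eq] at h2
  refine ⟨extu Gc φJ 0 u0, by rw [extu_le (le_refl 0)]; exact hne, ?_⟩
  have hwt := extu_wt hinj hA (show 0 ≤ j by omega) u0
  have hblock0 : wtB Gc u0 0 ≤ n - k + 1 := by
    rw [wtB, Finset.sum_range_one]
    have hvan : ∀ i ∈ Finset.univ.erase z, cwB Gc u0 0 (φJ i) = 0 := by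
      intro i hi
      rw [cwB_zero]
      have : (Matrix.vecMul (u0 0) (Gc 0)) (φJ i) = (Matrix.vecMul (u0 0) A) i := by
        simp [Matrix.vecMul, dotProduct, hAdef, Matrix.submatrix_apply]
      rw [this, h1]
      exact Matrix.one_apply_ne' (Finset.ne_of_mem_erase hi)
    have hv := wtV_le_of_vanish hinj hvan
    have hcard : (Finset.univ.erase z).card = k - 1 := by
      rw [Finset.card_erase_of_mem (Finset.mem_univ z)]
      simp
    rw [hcard] at hv
    omega
  have e1 : (j - 0) * (n - k) = (n - k) * j := by rw [Nat.sub_zero, Nat.mul_comm]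
  have e2 : (n - k) * (j + 1) = (n - k) * j + (n - k) := by ring
  omega

lemma minors_mono (hk : 0 < k) (hn : 0 < n) (hkn : k < n)
    {Gc : ℕ → Matrix (Fin k) (Fin n) F} {j j' : ℕ} (hj : j' < j) (h : Minors Gc j) :
    Minors Gc j' := by
  intro φ' hmono' hvalid'
  have hN : (j' + 1) * n ≤ (j + 1) * n := Nat.mul_le_mul_right n (by omega)
  set φ : Fin ((j + 1) * k) → Fin ((j + 1) * n) := fun t =>
    if h : (t : ℕ) < (j' + 1) * k then
      ⟨(φ' ⟨(t : ℕ), h⟩ : ℕ), lt_of_lt_of_le (Fin.is_lt _) hN⟩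
    else
      ⟨((t : ℕ) / k) * n + 1 + (t : ℕ) % k, by
        have h1 : (t : ℕ) / k ≤ j := by
          have := (Nat.div_lt_iff_lt_mul hk).mpr t.is_lt; omega
        have h2 : (t : ℕ) % k < k := Nat.mod_lt _ hk
        have h3 : ((t : ℕ) / k) * n ≤ j * n := Nat.mul_le_mul_right n h1
        have h4 : j * n + n = (j + 1) * n := by ring
        omega⟩
    with hφ
  have tail_ge : ∀ t : Fin ((j + 1) * k), ¬ ((t : ℕ) < (j' + 1) * k) →
      (j' + 1) ≤ (t : ℕ) / k := by
    intro t ht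
    exact (Nat.le_div_iff_mul_le hk).mpr (by omega)
  have hmono : StrictMono φ := by
    intro t1 t2 hlt
    have hltv : (t1 : ℕ) < (t2 : ℕ) := hlt
    rw [Fin.lt_def]
    by_cases h1 : (t1 : ℕ) < (j' + 1) * k
    · by_cases h2 : (t2 : ℕ) < (j' + 1) * k
      · simp only [hφ, dif_pos h1, dif_pos h2]
        exact hmono' (show (⟨(t1 : ℕ), h1⟩ : Fin ((j' + 1) * k)) < ⟨(t2 : ℕ), h2⟩ from hltv)
      · simp only [hφ, dif_pos h1, dif_neg h2]
        have hb : (φ' ⟨(t1 : ℕ), h1⟩ : ℕ) < (j' + 1) * n := Fin.is_lt _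
        have hd : (j' + 1) ≤ (t2 : ℕ) / k := tail_ge t2 h2
        have : (j' + 1) * n ≤ ((t2 : ℕ) / k) * n := Nat.mul_le_mul_right n hd
        omega
    · by_cases h2 : (t2 : ℕ) < (j' + 1) * k
      · omega
      · simp only [hφ, dif_neg h1, dif_neg h2]
        have ha : (t1 : ℕ) / k ≤ (t2 : ℕ) / k := Nat.div_le_div_right hltv.le
        have hm1 : (t1 : ℕ) % k < k := Nat.mod_lt _ hk
        have hm2 : (t2 : ℕ) % k < k := Nat.mod_lt _ hk
        rcases Nat.lt_or_ge ((t1 : ℕ) / k) ((t2 : ℕ) / k) with hd | hd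
        · have h5 : ((t1 : ℕ) / k + 1) * n ≤ ((t2 : ℕ) / k) * n := Nat.mul_le_mul_right n hd
          have h6 : ((t1 : ℕ) / k + 1) * n = ((t1 : ℕ) / k) * n + n := by ring
          omega
        · have heq : (t1 : ℕ) / k = (t2 : ℕ) / k := by omega
          have e1 := Nat.div_add_mod (t1 : ℕ) k
          have e2 := Nat.div_add_mod (t2 : ℕ) k
          have hr : (t1 : ℕ) % k < (t2 : ℕ) % k := by
            rw [heq] at e1
            omega
          have hq : ((t1 : ℕ) / k) * n = ((t2 : ℕ) / k) * n := by rw [heq]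
          omega
  have hvalid : ∀ (s : ℕ), 1 ≤ s → s ≤ j → ∀ h : s * k < (j + 1) * k,
      s * n < ((φ ⟨s * k, h⟩ : Fin ((j + 1) * n)) : ℕ) := by
    intro s hs1 hs2 hlt
    by_cases hsk : s * k < (j' + 1) * k
    · have hsj' : s ≤ j' := by
        have := Nat.lt_of_mul_lt_mul_right (a := k) hsk
        omega
      simp only [hφ, dif_pos hsk]
      exact hvalid' s hs1 hsj' hsk
    · simp only [hφ, dif_neg hsk]
      have hq : s * k / k = s := Nat.mul_div_cancel s hk
      have hm : s * k % k = 0 := Nat.mul_mod_left s k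
      rw [hq, hm]
      omega
  have hbig := h φ hmono hvalid
  have hKK : (j' + 1) * k + (j - j') * k = (j + 1) * k := by
    rw [← add_mul]; congr 1; omega
  set e : Fin ((j' + 1) * k) ⊕ Fin ((j - j') * k) ≃ Fin ((j + 1) * k) :=
    finSumFinEquiv.trans (finCongr hKK) with he
  have hvl : ∀ r : Fin ((j' + 1) * k), ((e (Sum.inl r)) : ℕ) = (r : ℕ) := by
    intro r; simp [he]
  have hvr : ∀ r : Fin ((j - j') * k), ((e (Sum.inr r)) : ℕ) = (j' + 1) * k + (r : ℕ) := by
    intro r; simp [he]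
  set M := (slideMat Gc j).submatrix id φ with hM
  have hdet2 : (M.submatrix e e).det = M.det := Matrix.det_submatrix_equiv_self e M
  set B := M.submatrix e e with hB
  have h11 : B.toBlocks₁₁ = (slideMat Gc j').submatrix id φ' := by
    funext r c
    show B (Sum.inl r) (Sum.inl c) = slideMat Gc j' r (φ' c)
    have hc' : ((e (Sum.inl c)) : ℕ) < (j' + 1) * k := by rw [hvl]; exact c.is_lt
    have hφc : (φ (e (Sum.inl c)) : ℕ) = (φ' ⟨((e (Sum.inl c)) : ℕ), hc'⟩ : ℕ) := by
      simp only [hφ, dif_pos hc']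
    have hcc : (⟨((e (Sum.inl c)) : ℕ), hc'⟩ : Fin ((j' + 1) * k)) = c := Fin.ext (hvl c)
    rw [hcc] at hφc
    show slideMat Gc j (e (Sum.inl r)) (φ (e (Sum.inl c))) = slideMat Gc j' r (φ' c)
    simp only [slideMat, hvl r, hφc]
  have h21 : B.toBlocks₂₁ = 0 := by
    funext r c
    show B (Sum.inr r) (Sum.inl c) = 0
    have hc' : ((e (Sum.inl c)) : ℕ) < (j' + 1) * k := by rw [hvl]; exact c.is_lt
    have hcc : (⟨((e (Sum.inl c)) : ℕ), hc'⟩ : Fin ((j' + 1) * k)) = c := Fin.ext (hvl c)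
    have hφc : (φ (e (Sum.inl c)) : ℕ) = (φ' c : ℕ) := by
      simp only [hφ, dif_pos hc', hcc]
    show slideMat Gc j (e (Sum.inr r)) (φ (e (Sum.inl c))) = 0
    rw [slideMat]
    rw [dif_neg]
    rintro ⟨hle, -⟩
    have hrow : (j' + 1) ≤ ((e (Sum.inr r)) : ℕ) / k := by
      rw [hvr]
      exact (Nat.le_div_iff_mul_le hk).mpr (by omega)
    have hcol : (φ (e (Sum.inl c)) : ℕ) / n < j' + 1 := by
      rw [hφc]
      exact (Nat.div_lt_iff_lt_mul hn).mpr (φ' c).is_lt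
    omega
  have hdet3 : B.det = B.toBlocks₁₁.det * B.toBlocks₂₂.det := by
    conv_lhs => rw [← Matrix.fromBlocks_toBlocks B, h21]
    exact Matrix.det_fromBlocks_zero₂₁ _ _ _
  have : B.toBlocks₁₁.det ≠ 0 := by
    refine left_ne_zero_of_mul (a := B.toBlocks₁₁.det) (b := B.toBlocks₂₂.det) ?_
    rw [← hdet3, hB, hdet2]
    exact hbig
  rw [h11] at this
  exact this

lemma wtB_add_zeros (hn : 0 < n) (Gc : ℕ → Matrix (Fin k) (Fin n) F)
    (u : ℕ → Fin k → F) (j : ℕ) :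
    wtB Gc u j + (Finset.univ.filter (fun Cc : Fin ((j + 1) * n) =>
      cwB Gc u ((Cc : ℕ) / n) ⟨(Cc : ℕ) % n, Nat.mod_lt _ hn⟩ = 0)).card = (j + 1) * n := by
  classical
  rw [← wtB_card hn Gc u j]
  have h : (Finset.univ.filter (fun Cc : Fin ((j + 1) * n) =>
        cwB Gc u ((Cc : ℕ) / n) ⟨(Cc : ℕ) % n, Nat.mod_lt _ hn⟩ = 0))
      = Finset.univ.filter (fun Cc : Fin ((j + 1) * n) =>
        ¬ (cwB Gc u ((Cc : ℕ) / n) ⟨(Cc : ℕ) % n, Nat.mod_lt _ hn⟩ ≠ 0)) := by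
    simp
  rw [h, Finset.card_filter_add_card_filter_not, Finset.card_univ, Fintype.card_fin]

lemma lower_bound (hk : 0 < k) (hn : 0 < n) (hkn : k ≤ n)
    {Gc : ℕ → Matrix (Fin k) (Fin n) F}
    (hGc0 : ∀ w : Fin k → F, Matrix.vecMul w (Gc 0) = 0 → w = 0)
    (j : ℕ) (hmin : Minors Gc j) :
    ∀ u : ℕ → Fin k → F, u 0 ≠ 0 → (n - k) * (j + 1) + 1 ≤ wtB Gc u j := by
  revert hmin
  induction j using Nat.strong_induction_on with
  | _ j IH =>
  intro hmin u hu0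
  by_contra hlt
  push_neg at hlt
  have hwt : wtB Gc u j ≤ (n - k) * (j + 1) := by omega
  rcases Nat.eq_or_lt_of_le hkn with hkeq | hklt
  · -- k = n : the bound is 1 and block 0 is nonzero
    have h0 : cwB Gc u 0 ≠ 0 := by
      rw [cwB_zero]; intro hz; exact hu0 (hGc0 _ hz)
    have h1 : 1 ≤ wtV (cwB Gc u 0) := wtV_pos h0
    have h2 : wtV (cwB Gc u 0) ≤ wtB Gc u j := by
      rw [wtB]
      exact Finset.single_le_sum (f := fun c => wtV (cwB Gc u c))
        (fun _ _ => Nat.zero_le _) (Finset.mem_range.mpr (by omega))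
    have h3 : n - k = 0 := by omega
    have h4 : (n - k) * (j + 1) = 0 := by rw [h3]; ring
    omega
  · set Z := Finset.univ.filter (fun Cc : Fin ((j + 1) * n) =>
        cwB Gc u ((Cc : ℕ) / n) ⟨(Cc : ℕ) % n, Nat.mod_lt _ hn⟩ = 0) with hZ
    have hcompl : wtB Gc u j + Z.card = (j + 1) * n := wtB_add_zeros hn Gc u j
    have e1 : (j + 1) * n = (j + 1) * k + (j + 1) * (n - k) := by
      rw [← Nat.mul_add]; congr 1; omega
    have hbf : (n - k) * (j + 1) = (j + 1) * (n - k) := Nat.mul_comm _ _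
    have hZcard : (j + 1) * k ≤ Z.card := by omega
    by_cases hcase : ∃ s, 1 ≤ s ∧ s ≤ j ∧
        s * k + 1 ≤ (Z.filter (fun Cc : Fin ((j + 1) * n) => (Cc : ℕ) ≤ s * n)).card
    · obtain ⟨s, hs1, hs2, hscard⟩ := hcase
      obtain ⟨s', rfl⟩ : ∃ s', s = s' + 1 := ⟨s - 1, by omega⟩
      have hmin' : Minors Gc s' := minors_mono hk hn hklt (by omega) hmin
      have hIH := IH s' (by omega) hmin' u hu0
      set Z2 := Finset.univ.filter (fun Dc : Fin ((s' + 1) * n) =>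
          cwB Gc u ((Dc : ℕ) / n) ⟨(Dc : ℕ) % n, Nat.mod_lt _ hn⟩ = 0) with hZ2
      have hcompl2 : wtB Gc u s' + Z2.card = (s' + 1) * n := wtB_add_zeros hn Gc u s'
      -- at most one element of the ≤-filter has value exactly (s'+1)*n
      have hsn_lt : (s' + 1) * n < (j + 1) * n := by
        exact (Nat.mul_lt_mul_right hn).mpr (by omega)
      have hWcard : (s' + 1) * k ≤ (Z.filter (fun Cc : Fin ((j + 1) * n) => (Cc : ℕ) < (s' + 1) * n)).card := by
        have hsub2 : Z.filter (fun Cc : Fin ((j + 1) * n) => (Cc : ℕ) ≤ (s' + 1) * n)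
            ⊆ (Z.filter (fun Cc : Fin ((j + 1) * n) => (Cc : ℕ) < (s' + 1) * n))
              ∪ {(⟨(s' + 1) * n, hsn_lt⟩ : Fin ((j + 1) * n))} := by
          intro Cc hCc
          simp only [Finset.mem_filter, hZ, Finset.mem_univ, true_and] at hCc
          rcases Nat.lt_or_ge (Cc : ℕ) ((s' + 1) * n) with hc | hc
          · exact Finset.mem_union_left _ (by
              simp only [Finset.mem_filter, hZ, Finset.mem_univ, true_and]
              exact ⟨hCc.1, hc⟩)
          · refine Finset.mem_union_right _ ?_
            simp only [Finset.mem_singleton]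
            exact Fin.ext (show (Cc : ℕ) = (s' + 1) * n by omega)
        have := Finset.card_le_card hsub2
        have hu := Finset.card_union_le (Z.filter (fun Cc : Fin ((j + 1) * n) => (Cc : ℕ) < (s' + 1) * n))
          {(⟨(s' + 1) * n, hsn_lt⟩ : Fin ((j + 1) * n))}
        simp only [Finset.card_singleton] at hu
        omega
      have hZ2card : (s' + 1) * k ≤ Z2.card := by
        have hmaps : ∀ Cc ∈ Z.filter (fun Cc : Fin ((j + 1) * n) => (Cc : ℕ) < (s' + 1) * n),
            (⟨(Cc : ℕ) % ((s' + 1) * n), Nat.mod_lt _ (by positivity)⟩ : Fin ((s' + 1) * n))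
              ∈ Z2 := by
          intro Cc hCc
          simp only [Finset.mem_filter, hZ, Finset.mem_univ, true_and] at hCc
          obtain ⟨hz, hlt'⟩ := hCc
          have hmod : (Cc : ℕ) % ((s' + 1) * n) = (Cc : ℕ) := Nat.mod_eq_of_lt hlt'
          simp only [hZ2, Finset.mem_filter, Finset.mem_univ, true_and]
          simpa only [hmod] using hz
        have hinj : Set.InjOn (fun Cc : Fin ((j + 1) * n) =>
            (⟨(Cc : ℕ) % ((s' + 1) * n), Nat.mod_lt _ (by positivity)⟩ : Fin ((s' + 1) * n)))
            (Z.filter (fun Cc : Fin ((j + 1) * n) => (Cc : ℕ) < (s' + 1) * n)) := by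
          intro a ha b hb hab
          simp only [Finset.mem_coe, Finset.mem_filter] at ha hb
          have ha' : (a : ℕ) % ((s' + 1) * n) = (a : ℕ) := Nat.mod_eq_of_lt ha.2
          have hb' : (b : ℕ) % ((s' + 1) * n) = (b : ℕ) := Nat.mod_eq_of_lt hb.2
          have := congrArg Fin.val hab
          simp only [ha', hb'] at this
          exact Fin.ext this
        have := Finset.card_le_card_of_injOn _ hmaps hinj
        omega
      have harith : (s' + 1) * n = (s' + 1) * k + (s' + 1) * (n - k) := by
        rw [← Nat.mul_add]; congr 1; omega
      have hcomm : (n - k) * (s' + 1) = (s' + 1) * (n - k) := Nat.mul_comm _ _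
      omega
    · push_neg at hcase
      obtain ⟨T, hTsub, hTcard⟩ := Finset.exists_subset_card_eq hZcard
      set f := T.orderEmbOfFin hTcard with hf
      have hvalid : ∀ (s : ℕ), 1 ≤ s → s ≤ j → ∀ h : s * k < (j + 1) * k,
          s * n < ((f ⟨s * k, h⟩ : Fin ((j + 1) * n)) : ℕ) := by
        intro s hs1 hs2 hlt2
        by_contra hnot
        push_neg at hnot
        have himg : ∀ i : ℕ, ∀ hi : i < s * k + 1,
            f ⟨i, by omega⟩ ∈ Z.filter (fun Cc : Fin ((j + 1) * n) => (Cc : ℕ) ≤ s * n) := by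
          intro i hi
          refine Finset.mem_filter.mpr ⟨hTsub (Finset.orderEmbOfFin_mem T hTcard _), ?_⟩
          have hle : f ⟨i, by omega⟩ ≤ f ⟨s * k, hlt2⟩ :=
            f.monotone (by simp [Fin.le_def]; omega)
          have := Fin.le_def.mp hle
          omega
        have hcardim : s * k + 1 ≤ (Z.filter (fun Cc : Fin ((j + 1) * n) => (Cc : ℕ) ≤ s * n)).card := by
          have hinj2 : Set.InjOn (fun i : Fin (s * k + 1) =>
              f ⟨(i : ℕ), by omega⟩) ↑(Finset.univ : Finset (Fin (s * k + 1))) := by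
            intro a _ b _ hab
            have := f.injective hab
            have := congrArg Fin.val this
            exact Fin.ext (by simpa using this)
          have hmaps2 : ∀ i : Fin (s * k + 1), i ∈ Finset.univ →
              f ⟨(i : ℕ), by omega⟩ ∈ Z.filter (fun Cc : Fin ((j + 1) * n) => (Cc : ℕ) ≤ s * n) :=
            fun i _ => himg (i : ℕ) i.is_lt
          have := Finset.card_le_card_of_injOn _ hmaps2 hinj2
          simpa using this
        have := hcase s hs1 hs2
        omega
      have hdet := hmin (fun i => f i) (fun a b hab => f.strictMono hab) hvalid
      have hker : Matrix.vecMul (flatu hk j u)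
          ((slideMat Gc j).submatrix id (fun i => f i)) = 0 := by
        funext i
        have hstep : Matrix.vecMul (flatu hk j u)
            ((slideMat Gc j).submatrix id (fun i => f i)) i
            = Matrix.vecMul (flatu hk j u) (slideMat Gc j) (f i) := by
          simp [Matrix.vecMul, dotProduct, Matrix.submatrix_apply]
        rw [hstep, vecMul_slideMat hk hn]
        have hmem := hTsub (Finset.orderEmbOfFin_mem T hTcard i)
        simp only [hZ, Finset.mem_filter, Finset.mem_univ, true_and] at hmem
        exact hmem
      have hflat : flatu hk j u ≠ 0 := by
        obtain ⟨i, hi⟩ := Function.ne_iff.mp hu0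
        intro h0
        apply hi
        have hidx : (i : ℕ) < (j + 1) * k := by
          have : k ≤ (j + 1) * k := Nat.le_mul_of_pos_left k (by omega)
          omega
        have := congrFun h0 ⟨(i : ℕ), hidx⟩
        rw [flatu] at this
        have hdiv : (i : ℕ) / k = 0 := Nat.div_eq_of_lt i.is_lt
        have hmod : (i : ℕ) % k = (i : ℕ) := Nat.mod_eq_of_lt i.is_lt
        simp only [hdiv] at this
        have hfin : (⟨(i : ℕ) % k, Nat.mod_lt _ hk⟩ : Fin k) = i := Fin.ext hmod
        rw [hfin] at this
        exact this
      exact hdet (Matrix.exists_vecMul_eq_zero_iff.mp ⟨flatu hk j u, hflat, hker⟩)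

lemma exists_small_of_det_zero (hk : 0 < k) (hn : 0 < n) (hkn : k ≤ n)
    {Gc : ℕ → Matrix (Fin k) (Fin n) F}
    (hGc0 : ∀ w : Fin k → F, Matrix.vecMul w (Gc 0) = 0 → w = 0) (j : ℕ)
    (φ : Fin ((j + 1) * k) → Fin ((j + 1) * n)) (hmono : StrictMono φ)
    (hvalid : ∀ (s : ℕ), 1 ≤ s → s ≤ j → ∀ h : s * k < (j + 1) * k,
      s * n < ((φ ⟨s * k, h⟩ : Fin ((j + 1) * n)) : ℕ))
    (hdet : ((slideMat Gc j).submatrix id φ).det = 0) :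
    ∃ u : ℕ → Fin k → F, u 0 ≠ 0 ∧ wtB Gc u j ≤ (n - k) * (j + 1) := by
  classical
  obtain ⟨φJ, hinjJ, hA⟩ := exists_invertible_cols (Gc 0) hGc0
  obtain ⟨x, hx0, hker⟩ := Matrix.exists_vecMul_eq_zero_iff.mpr hdet
  have hsupp2 : (Finset.univ.filter (fun r => x r ≠ 0)).Nonempty := by
    obtain ⟨r, hr⟩ := Function.ne_iff.mp hx0
    exact ⟨r, Finset.mem_filter.mpr ⟨Finset.mem_univ r, by simpa using hr⟩⟩
  set r0 := (Finset.univ.filter (fun r => x r ≠ 0)).min' hsupp2 with hr0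
  have hr0mem := Finset.min'_mem _ hsupp2
  have hr0ne : x r0 ≠ 0 := (Finset.mem_filter.mp hr0mem).2
  have hminx : ∀ r : Fin ((j + 1) * k), (r : ℕ) < (r0 : ℕ) → x r = 0 := by
    intro r hr
    by_contra hne
    have hle : r0 ≤ r := Finset.min'_le _ r (Finset.mem_filter.mpr ⟨Finset.mem_univ _, hne⟩)
    have := Fin.le_def.mp hle
    omega
  set s := (r0 : ℕ) / k with hs
  have hsj : s ≤ j := by
    have := (Nat.div_lt_iff_lt_mul hk).mpr r0.is_lt
    omega
  set ux := unflat hk j x with hux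
  have hflatux : flatu hk j ux = x := flatu_unflat hk j x
  have hlowzero : ∀ b, b < s → ux b = 0 := by
    intro b hb
    funext i
    rw [hux, unflat, dif_pos (show b < j + 1 by omega)]
    apply hminx
    show (i : ℕ) + k * b < (r0 : ℕ)
    have h1 : (i : ℕ) + k * b < k * (b + 1) := by
      rw [Nat.mul_succ]; have := i.is_lt; omega
    have h2 : k * (b + 1) ≤ k * s := Nat.mul_le_mul_left k (by omega)
    have h3 : k * s ≤ (r0 : ℕ) := by
      rw [hs, Nat.mul_comm]
      exact Nat.div_mul_le_self _ _
    omega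
  set u' : ℕ → Fin k → F := fun b => ux (b + s) with hu'
  have hval : u' 0 ⟨(r0 : ℕ) % k, Nat.mod_lt _ hk⟩ = x r0 := by
    show ux (0 + s) _ = x r0
    rw [hux, unflat, dif_pos (show 0 + s < j + 1 by omega)]
    congr 1
    refine Fin.ext ?_
    show (r0 : ℕ) % k + k * (0 + s) = (r0 : ℕ)
    rw [Nat.zero_add, hs]
    exact Nat.mod_add_div _ _
  have hu'0 : u' 0 ≠ 0 := by
    intro h0
    apply hr0ne
    rw [← hval, h0]
    rfl
  have hshift : ∀ c, cwB Gc u' c = cwB Gc ux (c + s) := fun c => cwB_shift Gc hlowzero c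
  set j' := j - s with hj'
  have hadd : (j' + 1) * k + s * k = (j + 1) * k := by rw [← add_mul]; congr 1; omega
  have haddn : (j' + 1) * n + s * n = (j + 1) * n := by rw [← add_mul]; congr 1; omega
  set idx : Fin ((j' + 1) * k) → Fin ((j + 1) * k) := fun t' =>
    ⟨(t' : ℕ) + s * k, by have := t'.is_lt; omega⟩ with hidx
  have hge : ∀ t', s * n ≤ (φ (idx t') : ℕ) := by
    intro t'
    rcases Nat.eq_zero_or_pos s with hs0 | hs0
    · rw [hs0]; simp
    · have hskl : s * k < (j + 1) * k := by
        have h := (Nat.mul_lt_mul_right hk).mpr (show s < j + 1 by omega)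
        exact h
      have h1 : s * n < (φ ⟨s * k, hskl⟩ : ℕ) := hvalid s hs0 hsj hskl
      have h2 : φ ⟨s * k, hskl⟩ ≤ φ (idx t') := by
        apply hmono.monotone
        rw [Fin.le_def]
        show s * k ≤ (t' : ℕ) + s * k
        omega
      have := Fin.le_def.mp h2
      omega
  set ψ : Fin ((j' + 1) * k) → Fin ((j' + 1) * n) := fun t' =>
    ⟨(φ (idx t') : ℕ) - s * n, by
      have h1 := (φ (idx t')).is_lt
      have h2 := hge t'
      omega⟩ with hψ
  have hψinj : Function.Injective ψ := by
    intro a b hab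
    have hva := hge a
    have hvb := hge b
    have h := congrArg Fin.val hab
    simp only [hψ] at h
    have hφ : φ (idx a) = φ (idx b) := Fin.ext (by omega)
    have := congrArg Fin.val (hmono.injective hφ)
    simp only [hidx] at this
    exact Fin.ext (by omega)
  have hψzero : ∀ t', cwB Gc u' ((ψ t' : ℕ) / n) ⟨(ψ t' : ℕ) % n, Nat.mod_lt _ hn⟩ = 0 := by
    intro t'
    have hC0 : Matrix.vecMul x (slideMat Gc j) (φ (idx t')) = 0 := by
      have h1 := congrFun hker (idx t')
      have h2 : Matrix.vecMul x ((slideMat Gc j).submatrix id φ) (idx t')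
          = Matrix.vecMul x (slideMat Gc j) (φ (idx t')) := by
        simp [Matrix.vecMul, dotProduct, Matrix.submatrix_apply]
      rw [h2] at h1
      exact h1
    rw [← hflatux, vecMul_slideMat hk hn] at hC0
    set C := (φ (idx t') : ℕ) with hC
    set v := C - s * n with hv
    have hvC : v + s * n = C := by
      have := hge t'
      omega
    have hdivC : C / n = v / n + s := by
      rw [← hvC, Nat.add_mul_div_right _ _ hn]
    have hmodC : C % n = v % n := by
      rw [← hvC, Nat.add_mul_mod_self_right]
    have hvv : ((ψ t' : Fin ((j' + 1) * n)) : ℕ) = v := rfl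
    rw [hvv, hshift]
    have heq1 : v / n + s = C / n := hdivC.symm
    rw [heq1]
    have heq2 : (⟨v % n, Nat.mod_lt _ hn⟩ : Fin n) = ⟨C % n, Nat.mod_lt _ hn⟩ :=
      Fin.ext hmodC.symm
    rw [heq2]
    exact hC0
  have hwt' : wtB Gc u' j' ≤ (n - k) * (j' + 1) := by
    set Z3 := Finset.univ.filter (fun D : Fin ((j' + 1) * n) =>
        cwB Gc u' ((D : ℕ) / n) ⟨(D : ℕ) % n, Nat.mod_lt _ hn⟩ = 0) with hZ3
    have hcompl3 : wtB Gc u' j' + Z3.card = (j' + 1) * n := wtB_add_zeros hn Gc u' j'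
    have hZ3card : (j' + 1) * k ≤ Z3.card := by
      have hmaps : ∀ t' : Fin ((j' + 1) * k), t' ∈ Finset.univ → ψ t' ∈ Z3 := by
        intro t' _
        simp only [hZ3, Finset.mem_filter, Finset.mem_univ, true_and]
        exact hψzero t'
      have hinj3 : Set.InjOn ψ ↑(Finset.univ : Finset (Fin ((j' + 1) * k))) :=
        fun a _ b _ hab => hψinj hab
      have := Finset.card_le_card_of_injOn _ hmaps hinj3
      simpa using this
    have harith : (j' + 1) * n = (j' + 1) * k + (j' + 1) * (n - k) := by
      rw [← Nat.mul_add]; congr 1; omega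
    have hcomm : (n - k) * (j' + 1) = (j' + 1) * (n - k) := Nat.mul_comm _ _
    omega
  refine ⟨extu Gc φJ j' u', ?_, ?_⟩
  · rw [extu_le (Nat.zero_le j')]
    exact hu'0
  · have h1 := extu_wt hinjJ hA (show j' ≤ j from by rw [hj']; exact Nat.sub_le j s) u'
    have e3 : (j - j') * (n - k) = s * (n - k) := by
      congr 1
      rw [hj']
      exact Nat.sub_sub_self hsj
    have e4 : (n - k) * (j' + 1) + s * (n - k) = (n - k) * (j + 1) := by
      rw [Nat.mul_comm s, ← Nat.mul_add]
      congr 1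
      omega
    omega

lemma wtTrunc_eq (j : ℕ) (v : Fin n → Polynomial F) (w : ℕ → Fin n → F)
    (h : ∀ c ≤ j, ∀ t, (v t).coeff c = w c t) :
    wtTrunc j v = ∑ c ∈ Finset.range (j + 1), wtV (w c) := by
  classical
  rw [wtTrunc]
  have hset : {p : ℕ × Fin n | p.1 ≤ j ∧ (v p.2).coeff p.1 ≠ 0}
      = ↑(((Finset.range (j + 1)) ×ˢ (Finset.univ : Finset (Fin n))).filter
          (fun p : ℕ × Fin n => (v p.2).coeff p.1 ≠ 0)) := by
    ext p
    simp only [Set.mem_setOf_eq, Finset.coe_filter, Finset.mem_product, Finset.mem_range,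
      Finset.mem_univ, and_true, Nat.lt_succ_iff]
  rw [hset, Set.ncard_coe_finset]
  rw [Finset.card_filter, Finset.sum_product]
  refine Finset.sum_congr rfl fun c hc => ?_
  rw [wtV, Finset.card_filter]
  refine Finset.sum_congr rfl fun t _ => ?_
  have hct := h c (by simpa [Nat.lt_succ_iff] using hc) t
  rw [hct]

lemma coeff_combination (G : Matrix (Fin k) (Fin n) (Polynomial F)) (p : Fin k → Polynomial F)
    (c : ℕ) (t : Fin n) :
    (∑ i, p i * G i t).coeff c = cwB (Gcoeff G) (fun b i => (p i).coeff b) c t := by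
  rw [Polynomial.finset_sum_coeff]
  have h1 : ∀ i : Fin k, (p i * G i t).coeff c
      = ∑ a ∈ Finset.range (c + 1), (p i).coeff a * (G i t).coeff (c - a) := by
    intro i
    rw [Polynomial.coeff_mul]
    exact Finset.Nat.sum_antidiagonal_eq_sum_range_succ_mk _ c
  simp only [h1]
  rw [Finset.sum_comm]
  rw [cwB, Finset.sum_apply]
  refine Finset.sum_congr rfl fun a _ => ?_
  simp [Matrix.vecMul, dotProduct, Gcoeff]

lemma forward_mem {G : Matrix (Fin k) (Fin n) (Polynomial F)}
    {C : Submodule (Polynomial F) (Fin n → Polynomial F)}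
    (hspan : Submodule.span (Polynomial F)
      (Set.range (fun i : Fin k => fun t => G i t)) = C) (j : ℕ) (w : ℕ)
    (hw : w ∈ {w | ∃ v ∈ C, (fun t => (v t).coeff 0) ≠ (0 : Fin n → F) ∧ w = wtTrunc j v}) :
    ∃ u : ℕ → Fin k → F, u 0 ≠ 0 ∧ w = wtB (Gcoeff G) u j := by
  obtain ⟨v, hvC, hv0, rfl⟩ := hw
  rw [← hspan] at hvC
  obtain ⟨p, hp⟩ := (Submodule.mem_span_range_iff_exists_fun (Polynomial F)).mp hvC
  have hvt : ∀ t, v t = ∑ i, p i * G i t := by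
    intro t
    rw [← hp]
    simp [Finset.sum_apply]
  set u : ℕ → Fin k → F := fun b i => (p i).coeff b with hu
  have hcoeff : ∀ c, ∀ t, (v t).coeff c = cwB (Gcoeff G) u c t := by
    intro c t
    rw [hvt t]
    exact coeff_combination G p c t
  refine ⟨u, ?_, ?_⟩
  · intro h0
    apply hv0
    funext t
    rw [hcoeff 0 t, cwB_zero, h0, Matrix.zero_vecMul]
  · rw [wtB]
    exact wtTrunc_eq j v _ (fun c _ t => hcoeff c t)

lemma backward_mem (hk : 0 < k) {G : Matrix (Fin k) (Fin n) (Polynomial F)}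
    {C : Submodule (Polynomial F) (Fin n → Polynomial F)}
    (hspan : Submodule.span (Polynomial F)
      (Set.range (fun i : Fin k => fun t => G i t)) = C)
    (hGc0 : ∀ w : Fin k → F, Matrix.vecMul w (Gcoeff G 0) = 0 → w = 0)
    (j : ℕ) (u : ℕ → Fin k → F) (hu0 : u 0 ≠ 0) :
    wtB (Gcoeff G) u j
      ∈ {w | ∃ v ∈ C, (fun t => (v t).coeff 0) ≠ (0 : Fin n → F) ∧ w = wtTrunc j v} := by
  classical
  set p : Fin k → Polynomial F :=
    fun i => ∑ b ∈ Finset.range (j + 1), Polynomial.C (u b i) * Polynomial.X ^ b with hp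
  set v : Fin n → Polynomial F := fun t => ∑ i, p i * G i t with hv
  have hvC : v ∈ C := by
    rw [← hspan, Submodule.mem_span_range_iff_exists_fun]
    refine ⟨p, ?_⟩
    funext t
    simp [hv, Finset.sum_apply]
  have hpcoeff : ∀ b ≤ j, ∀ i, (p i).coeff b = u b i := by
    intro b hb i
    rw [hp]
    rw [Polynomial.finset_sum_coeff]
    rw [Finset.sum_eq_single b]
    · simp [Polynomial.coeff_C_mul, Polynomial.coeff_X_pow]
    · intro b' _ hbb'
      simp only [Polynomial.coeff_C_mul, Polynomial.coeff_X_pow]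
      rw [if_neg (fun h => hbb' h.symm)]
      exact mul_zero _
    · intro hb'
      exact absurd (Finset.mem_range.mpr (by omega)) hb'
  have hcoeff : ∀ c ≤ j, ∀ t, (v t).coeff c = cwB (Gcoeff G) u c t := by
    intro c hc t
    rw [hv]
    show (∑ i, p i * G i t).coeff c = _
    rw [coeff_combination G p c t]
    have := cwB_congr (Gc := Gcoeff G) (u := fun b i => (p i).coeff b) (u' := u) (c := c)
      (fun r hr => by funext i; exact hpcoeff r (by omega) i)
    rw [this]
  refine ⟨v, hvC, ?_, ?_⟩
  · intro h0
    apply hu0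
    apply hGc0
    rw [← cwB_zero]
    funext t
    rw [← hcoeff 0 (by omega) t]
    exact congrFun h0 t
  · rw [wtB]
    exact (wtTrunc_eq j v _ (fun c hc t => hcoeff c hc t)).symm

end Stmt10Aux

theorem stmt10 {F : Type*} [Field F] [Fintype F] {n k ν : ℕ} (hk : 0 < k) (hn : 0 < n)
    (hkn : k ≤ n)
    (C : Submodule (Polynomial F) (Fin n → Polynomial F))
    (G : Matrix (Fin k) (Fin n) (Polynomial F))
    (hG : IsEncoder C G) (hdf : IsDelayFree G)
    (hsupp : ∀ i : ℕ, ν < i → Gcoeff G i = 0) (j : ℕ) :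
    colDist C j = (n - k) * (j + 1) + 1 ↔
      ∀ φ : Fin ((j + 1) * k) → Fin ((j + 1) * n), StrictMono φ →
        (∀ (s : ℕ), 1 ≤ s → s ≤ j → ∀ h : s * k < (j + 1) * k,
          s * n < ((φ ⟨s * k, h⟩ : Fin ((j + 1) * n)) : ℕ)) →
        ((slideMat (Gcoeff G) j).submatrix id φ).det ≠ 0 := by
  classical
  have hGc0 : ∀ w : Fin k → F, Matrix.vecMul w (Gcoeff G 0) = 0 → w = 0 := by
    intro w hw
    have hsum : (∑ i, w i • (fun t => (G i t).coeff 0)) = (0 : Fin n → F) := by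
      funext t
      have := congrFun hw t
      simpa [Matrix.vecMul, dotProduct, Gcoeff, Finset.sum_apply] using this
    funext i
    exact Fintype.linearIndependent_iff.mp hdf w hsum i
  have hSdef : colDist C j
      = sInf {w | ∃ v ∈ C, (fun t => (v t).coeff 0) ≠ (0 : Fin n → F) ∧ w = wtTrunc j v} := rfl
  constructor
  · intro hcol φ hmono hvalid
    intro hdet0
    obtain ⟨u, hu0, hwt⟩ := Stmt10Aux.exists_small_of_det_zero hk hn hkn hGc0 j φ
      hmono hvalid hdet0
    have hmem := Stmt10Aux.backward_mem hk hG.2 hGc0 j u hu0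
    have hle := Nat.sInf_le hmem
    rw [← hSdef, hcol] at hle
    exact Nat.not_succ_le_self _ (le_trans hle hwt)
  · intro hmin
    have hminM : Stmt10Aux.Minors (Gcoeff G) j := hmin
    obtain ⟨u, hu0, hub⟩ := Stmt10Aux.exists_low_weight hk hn hkn (Gcoeff G) hGc0 j
    have hlb := Stmt10Aux.lower_bound hk hn hkn hGc0 j hminM
    have hmemu := Stmt10Aux.backward_mem hk hG.2 hGc0 j u hu0
    rw [hSdef]
    apply le_antisymm
    · calc sInf {w | ∃ v ∈ C, (fun t => (v t).coeff 0) ≠ (0 : Fin n → F) ∧ w = wtTrunc j v}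
          ≤ Stmt10Aux.wtB (Gcoeff G) u j := Nat.sInf_le hmemu
        _ ≤ (n - k) * (j + 1) + 1 := hub
    · refine le_csInf ⟨_, hmemu⟩ ?_
      intro w hw
      obtain ⟨u', hu'0, rfl⟩ := Stmt10Aux.forward_mem hG.2 j w hw
      exact hlb u' hu'0
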